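/- Let K ≤ D and let σ_1, ..., σ_K ∈ ℝ^D be points that are affinely dependent (so their convex hull is not a (K−1)-dimensional simplex), with Σ ∈ ℝ^{D×K} the matrix with columns σ_1, ..., σ_K. Then there exist K affinely independent points σ̃_1, ..., σ̃_K ∈ ℝ^D (forming a matrix Σ̃) whose convex hull contains the convex hull of σ_1, ..., σ_K; consequently, for all data points x_1, ..., x_T ∈ ℝ^D and all stochastic vectors γ_1, ..., γ_T ∈ ℝ^K there exist stochastic vectors γ̃_1, ..., γ̃_T ∈ ℝ^K with Σ_{t=1}^T ‖x_t − Σ̃ γ̃_t‖_2^2 ≤ Σ_{t=1}^T ‖x_t − Σ γ_t‖_2^2. -/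

import Mathlib

open Module Submodule

lemma aux_comb_mem {n D : ℕ} (f : Fin n → Fin D → ℝ) (w : Fin n → ℝ)
    (h0 : ∀ k, 0 ≤ w k) (h1 : ∑ k, w k = 1) :
    ∑ k, w k • f k ∈ convexHull ℝ (Set.range f) := by
  have := Finset.centerMass_mem_convexHull (Finset.univ) (w := w) (z := f)
    (fun i _ => h0 i) (by rw [h1]; exact one_pos) (fun i _ => Set.mem_range_self i)
  rwa [Finset.centerMass_eq_of_sum_1 _ _ h1] at this

lemma aux_extract {n D : ℕ} (f : Fin n → Fin D → ℝ) (hinj : Function.Injective f)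
    {y : Fin D → ℝ} (hy : y ∈ convexHull ℝ (Set.range f)) :
    ∃ w : Fin n → ℝ, (∀ k, 0 ≤ w k) ∧ ∑ k, w k = 1 ∧ ∑ k, w k • f k = y := by
  classical
  have hr : Set.range f = ↑(Finset.univ.image f) := by
    simp
  rw [hr, Finset.convexHull_eq] at hy
  obtain ⟨w, h0, h1, hc⟩ := hy
  rw [Finset.centerMass_eq_of_sum_1 _ _ h1] at hc
  have hinj' : ∀ x ∈ Finset.univ, ∀ y ∈ Finset.univ, f x = f y → x = y :=
    fun x _ y _ h => hinj h
  refine ⟨fun k => w (f k), fun k => h0 _ (Finset.mem_image_of_mem f (Finset.mem_univ k)), ?_, ?_⟩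
  · rw [← h1, Finset.sum_image hinj']
  · rw [← hc, Finset.sum_image hinj']
    simp

lemma aux_superspace : ∀ (n : ℕ) {D : ℕ} (V : Submodule ℝ (Fin D → ℝ)),
    finrank ℝ V ≤ n → n ≤ D → ∃ W, V ≤ W ∧ finrank ℝ W = n := by
  intro n
  induction n with
  | zero => exact fun V h1 _ => ⟨V, le_rfl, Nat.le_zero.mp h1⟩
  | succ n ih =>
    intro D V h1 h2
    rcases eq_or_lt_of_le h1 with heq | hlt
    · exact ⟨V, le_rfl, heq⟩
    obtain ⟨W, hVW, hW⟩ := ih V (Nat.lt_succ_iff.mp hlt) (Nat.le_of_succ_le h2)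
    have hWlt : finrank ℝ W < finrank ℝ (Fin D → ℝ) := by
      rw [hW, Module.finrank_pi, Fintype.card_fin]; omega
    obtain ⟨x, hx⟩ := Submodule.exists_of_finrank_lt W hWlt
    have hxW : x ∉ W := by simpa using hx 1 one_ne_zero
    have hx0 : x ≠ 0 := fun h => hxW (h ▸ W.zero_mem)
    refine ⟨W ⊔ Submodule.span ℝ {x}, le_trans hVW le_sup_left, ?_⟩
    have hinf : W ⊓ Submodule.span ℝ {x} = ⊥ := by
      rw [eq_bot_iff]
      rintro y hy
      rw [Submodule.mem_inf, Submodule.mem_span_singleton] at hy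
      obtain ⟨hyW, c, rfl⟩ := hy
      rcases eq_or_ne c 0 with rfl | hc
      · simp
      · exact absurd hyW (hx c hc)
    have hkey := Submodule.finrank_sup_add_finrank_inf_eq W (Submodule.span ℝ {x})
    rw [hinf, finrank_span_singleton hx0, finrank_bot] at hkey
    omega


/-- Let `K ≤ D` and let `σ_1,...,σ_K ∈ ℝ^D` be affinely dependent.
Then there exist affinely independent points `σ̃_1,...,σ̃_K ∈ ℝ^D` whose convex hull
contains the convex hull of the `σ_k`; consequently for all data `x_1,...,x_T` and
stochastic `γ_1,...,γ_T` there are stochastic `γ̃_1,...,γ̃_T` with total squared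
error w.r.t. `Σ̃` no larger than that w.r.t. `Σ`. -/
theorem stmt_7 (D K : ℕ) (hKD : K ≤ D) (σ : Fin K → Fin D → ℝ)
    (hdep : ¬ AffineIndependent ℝ σ) :
    ∃ σt : Fin K → Fin D → ℝ, AffineIndependent ℝ σt ∧
      convexHull ℝ (Set.range σ) ⊆ convexHull ℝ (Set.range σt) ∧
      ∀ (T : ℕ) (x : Fin T → Fin D → ℝ) (γ : Fin T → Fin K → ℝ),
        (∀ t, (∀ k, 0 ≤ γ t k) ∧ ∑ k, γ t k = 1) →
        ∃ γt : Fin T → Fin K → ℝ,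
          (∀ t, (∀ k, 0 ≤ γt t k) ∧ ∑ k, γt t k = 1) ∧
          ∑ t, ∑ d, (x t d - ∑ k, γt t k * σt k d) ^ 2 ≤
            ∑ t, ∑ d, (x t d - ∑ k, γ t k * σ k d) ^ 2 := by
  classical
  rcases Nat.lt_or_ge K 2 with hK | hK
  · haveI : Subsingleton (Fin K) := by
      rw [Fin.subsingleton_iff_le_one]; omega
    exact absurd (affineIndependent_of_subsingleton ℝ σ) hdep
  obtain ⟨K', rfl⟩ : ∃ K', K = K' + 2 := ⟨K - 2, by omega⟩
  set v : Fin (K' + 2) → Fin D → ℝ := fun k => σ k - σ 0 with hv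
  set V : Submodule ℝ (Fin D → ℝ) :=
    Submodule.span ℝ (Set.range (fun i : {x : Fin (K' + 2) // x ≠ 0} => v i)) with hVdef
  have hVrank : finrank ℝ V ≤ K' + 1 := by
    have h := finrank_range_le_card (R := ℝ) (fun i : {x : Fin (K' + 2) // x ≠ 0} => v i)
    rwa [Set.finrank, Fintype.card_subtype_compl, Fintype.card_fin, Fintype.card_unique] at h
  obtain ⟨W, hVW, hW⟩ := aux_superspace (K' + 1) V hVrank (by omega)
  have hvW : ∀ k, v k ∈ W := by
    intro k
    rcases eq_or_ne k 0 with rfl | hk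
    · have h : v 0 = 0 := by simp [hv]
      rw [h]; exact W.zero_mem
    · exact hVW (Submodule.subset_span ⟨⟨k, hk⟩, rfl⟩)
  set b : Basis (Fin (K' + 1)) ℝ W := finBasisOfFinrankEq ℝ W hW with hb
  set L : (Fin (K' + 1) → ℝ) →ₗ[ℝ] (Fin D → ℝ) :=
    W.subtype.comp b.equivFun.symm.toLinearMap with hL
  have hLinj : Function.Injective L :=
    (injective_subtype W).comp b.equivFun.symm.injective
  set u : Fin (K' + 2) → Fin (K' + 1) → ℝ := fun k => b.equivFun ⟨v k, hvW k⟩ with hu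
  have hLu : ∀ k, L (u k) = v k := by
    intro k
    show W.subtype (b.equivFun.symm (b.equivFun ⟨v k, hvW k⟩)) = v k
    rw [b.equivFun.symm_apply_apply]
    rfl
  set S : ℝ := ∑ k, ∑ j, |u k j| with hS
  set M : ℝ := S + 1 with hM
  have hS0 : 0 ≤ S :=
    Finset.sum_nonneg fun k _ => Finset.sum_nonneg fun j _ => abs_nonneg _
  have hM0 : 0 < M := by rw [hM]; linarith
  have habs : ∀ k j, |u k j| ≤ S := by
    intro k j
    calc |u k j| ≤ ∑ j, |u k j| :=
          Finset.single_le_sum (f := fun j => |u k j|) (fun j _ => abs_nonneg _)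
            (Finset.mem_univ j)
      _ ≤ S := Finset.single_le_sum (f := fun k => ∑ j, |u k j|)
          (fun k _ => Finset.sum_nonneg fun j _ => abs_nonneg _) (Finset.mem_univ k)
  have hlow : ∀ k j, -M ≤ u k j := by
    intro k j
    have h1 := habs k j
    have h2 := neg_abs_le (u k j)
    rw [hM]; linarith
  have hsumu : ∀ k, ∑ j, u k j ≤ M := by
    intro k
    calc ∑ j, u k j ≤ ∑ j, |u k j| := Finset.sum_le_sum fun j _ => le_abs_self _
      _ ≤ S := Finset.single_le_sum (f := fun k => ∑ j, |u k j|)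
          (fun k _ => Finset.sum_nonneg fun j _ => abs_nonneg _) (Finset.mem_univ k)
      _ ≤ M := by rw [hM]; linarith
  set c : ℝ := (K' + 2 : ℝ) * M with hc
  have hc0 : 0 < c := by
    rw [hc]; positivity
  set p : Fin (K' + 2) → Fin (K' + 1) → ℝ :=
    fun i j => (if i = j.succ then c else 0) - M with hp
  set wt : Fin (K' + 2) → Fin (K' + 2) → ℝ :=
    fun k => Fin.cases (1 - ∑ j : Fin (K' + 1), (u k j + M) / c) (fun j => (u k j + M) / c)
    with hwt
  have hwt_succ : ∀ k (j : Fin (K' + 1)), wt k j.succ = (u k j + M) / c := by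
    intro k j; simp [hwt]
  have hwt_zero : ∀ k, wt k 0 = 1 - ∑ j : Fin (K' + 1), (u k j + M) / c := by
    intro k; simp [hwt]
  have hwt_sum : ∀ k, ∑ i, wt k i = 1 := by
    intro k
    rw [Fin.sum_univ_succ]
    simp [hwt_zero, hwt_succ]
  have hwt_nonneg : ∀ k i, 0 ≤ wt k i := by
    intro k i
    induction i using Fin.cases with
    | zero =>
      rw [hwt_zero, sub_nonneg, ← Finset.sum_div, div_le_one hc0]
      have h : ∑ j : Fin (K' + 1), (u k j + M) = (∑ j, u k j) + (K' + 1) * M := by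
        rw [Finset.sum_add_distrib]; simp [mul_comm]
      rw [h, hc]
      have h2 := hsumu k
      push_cast
      nlinarith [hM0]
    | succ j =>
      rw [hwt_succ]
      have h := hlow k j
      apply div_nonneg (by linarith) hc0.le
  have hwt_comb : ∀ k, ∑ i, wt k i • p i = u k := by
    intro k
    funext j
    have h1 : (∑ i, wt k i • p i) j = ∑ i, wt k i * p i j := by
      simp [Finset.sum_apply]
    rw [h1]
    have h2 : ∀ i, wt k i * p i j = (if i = j.succ then wt k i * c else 0) - wt k i * M := by
      intro i
      by_cases h : i = j.succ <;> simp [hp, h] <;> ring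
    simp only [h2, Finset.sum_sub_distrib, Finset.sum_ite_eq', Finset.mem_univ, if_true,
      ← Finset.sum_mul, hwt_sum k, one_mul, hwt_succ]
    field_simp
    ring
  set σt : Fin (K' + 2) → Fin D → ℝ := fun k => σ 0 + L (p k) with hσt
  have hcomb : ∀ k, σ k = ∑ i, wt k i • σt i := by
    intro k
    have h : ∑ i, wt k i • σt i = (∑ i, wt k i) • σ 0 + L (∑ i, wt k i • p i) := by
      rw [map_sum, Finset.sum_smul, ← Finset.sum_add_distrib]
      congr 1; funext i
      rw [hσt]; simp [smul_add, map_smul]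
    rw [h, hwt_sum k, one_smul, hwt_comb k, hLu k, hv]
    simp
  have hσt_ind : AffineIndependent ℝ σt := by
    rw [affineIndependent_iff_linearIndependent_vsub ℝ σt 0]
    set φ : {x : Fin (K' + 2) // x ≠ 0} → Fin (K' + 1) :=
      fun i => (i : Fin (K' + 2)).pred i.prop with hφ
    have hφinj : Function.Injective φ := by
      intro a b h
      apply Subtype.ext
      have h2 : (φ a).succ = (φ b).succ := by rw [h]
      rwa [Fin.succ_pred, Fin.succ_pred] at h2
    have hbase : LinearIndependent ℝ
        (fun j : Fin (K' + 1) => c • (Pi.single j 1 : Fin (K' + 1) → ℝ)) := by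
      have h := (Pi.basisFun ℝ (Fin (K' + 1))).linearIndependent.units_smul
        (fun _ => Units.mk0 c hc0.ne')
      convert h using 1
      funext j
      simp [Pi.basisFun_apply]
    have h := (hbase.comp φ hφinj).map' L (LinearMap.ker_eq_bot.mpr hLinj)
    convert h using 1
    funext i
    have hps : p (i : Fin (K' + 2)) - p 0 = c • (Pi.single (φ i) 1 : Fin (K' + 1) → ℝ) := by
      funext j
      have h0 : (0 : Fin (K' + 2)) ≠ j.succ := (Fin.succ_ne_zero j).symm
      have hiff : (i : Fin (K' + 2)) = j.succ ↔ j = φ i := by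
        constructor
        · intro h; rw [hφ]; simp [h]
        · intro h; rw [h, hφ, Fin.succ_pred]
      simp only [hp, Pi.sub_apply, if_neg h0, Pi.smul_apply, Pi.single_apply, smul_eq_mul]
      by_cases h : (i : Fin (K' + 2)) = j.succ
      · rw [if_pos h, if_pos (hiff.mp h)]; ring
      · rw [if_neg h, if_neg (fun hh => h (hiff.mpr hh))]; ring
    show σt (i : Fin (K' + 2)) -ᵥ σt 0 =
      L ((fun j => c • (Pi.single j 1 : Fin (K' + 1) → ℝ)) (φ i))
    simp only [hσt, vsub_eq_sub]
    rw [show σ 0 + L (p i) - (σ 0 + L (p 0)) = L (p i) - L (p 0) by abel, ← map_sub, hps]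
  have hmem : ∀ k, σ k ∈ convexHull ℝ (Set.range σt) := by
    intro k
    rw [hcomb k]
    exact aux_comb_mem σt (wt k) (hwt_nonneg k) (hwt_sum k)
  have hsub : convexHull ℝ (Set.range σ) ⊆ convexHull ℝ (Set.range σt) := by
    apply convexHull_min _ (convex_convexHull ℝ _)
    rintro _ ⟨k, rfl⟩
    exact hmem k
  refine ⟨σt, hσt_ind, hsub, ?_⟩
  intro T x γ hγ
  have hinj : Function.Injective σt := hσt_ind.injective
  have hyt : ∀ t, ∑ k, γ t k • σ k ∈ convexHull ℝ (Set.range σt) :=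
    fun t => hsub (aux_comb_mem σ (γ t) (hγ t).1 (hγ t).2)
  choose γt h0 h1 hcomb2 using fun t => aux_extract σt hinj (hyt t)
  refine ⟨γt, fun t => ⟨h0 t, h1 t⟩, le_of_eq ?_⟩
  apply Finset.sum_congr rfl
  intro t _
  apply Finset.sum_congr rfl
  intro d _
  have e1 : ∑ k, γt t k * σt k d = (∑ k, γt t k • σt k) d := by simp [Finset.sum_apply]
  have e2 : ∑ k, γ t k * σ k d = (∑ k, γ t k • σ k) d := by simp [Finset.sum_apply]
  rw [e1, e2, hcomb2 t]
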